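/- Let π be a two-stack sortable permutation of length n ≥ 1 and let D(π) = (π1, π2). Then each of π1 and π2 is either the empty permutation or a two-stack sortable permutation. -/

import Mathlib

namespace TSP

theorem foldr_max_mem {α : Type} [LinearOrder α] (x : α) (l : List α) :
    l.foldr max x ∈ x :: l := by
  induction l with
  | nil => simp
  | cons a t ih =>
    simp only [List.foldr_cons]
    rcases max_choice a (t.foldr max x) with h | h <;> rw [h]
    · simp
    · rcases List.mem_cons.mp ih with h' | h'
      · rw [h']; simp
      · exact List.mem_cons.mpr (Or.inr (List.mem_cons.mpr (Or.inr h')))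

theorem length_takeWhile_lt {α : Type} [DecidableEq α] {m : α} {l : List α}
    (h : m ∈ l) : (l.takeWhile (· ≠ m)).length < l.length := by
  have hd : l.dropWhile (· ≠ m) ≠ [] := by
    intro hnil
    have := List.dropWhile_eq_nil_iff.mp hnil m h
    simp at this
  have hsum : (l.takeWhile (· ≠ m)).length + (l.dropWhile (· ≠ m)).length = l.length := by
    rw [← List.length_append, List.takeWhile_append_dropWhile]
  have : 0 < (l.dropWhile (· ≠ m)).length := List.length_pos_iff.mpr hd
  omega

theorem length_tail_dropWhile_lt {α : Type} [DecidableEq α] {m : α} {l : List α}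
    (h : l ≠ []) : ((l.dropWhile (· ≠ m)).tail).length < l.length := by
  have hsum : (l.takeWhile (· ≠ m)).length + (l.dropWhile (· ≠ m)).length = l.length := by
    rw [← List.length_append, List.takeWhile_append_dropWhile]
  have h2 : ((l.dropWhile (· ≠ m)).tail).length = (l.dropWhile (· ≠ m)).length - 1 :=
    List.length_tail
  have : 0 < l.length := List.length_pos_iff.mpr h
  omega

/-- The stack-sorting operator `S`: `S(ε) = ε`, and if `A` is nonempty with
largest element `m` and `A = A_L · (m) · A_R`, then `S(A) = S(A_L) · S(A_R) · (m)`. -/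
def S {α : Type} [LinearOrder α] : List α → List α
  | [] => []
  | x :: l =>
    let m := l.foldr max x
    S ((x :: l).takeWhile (· ≠ m)) ++ S (((x :: l).dropWhile (· ≠ m)).tail) ++ [m]
termination_by l => l.length
decreasing_by
  · exact length_takeWhile_lt (by simpa [List.foldr_attach] using foldr_max_mem x l)
  · exact length_tail_dropWhile_lt (by simp)

/-- The identity permutation `id_n = (1, 2, …, n)` as a list. -/
def idPerm (n : ℕ) : List ℕ := List.range' 1 n

/-- `l` is a permutation of `{1, …, n}` (viewed as a sequence). -/
def IsPermOf (n : ℕ) (l : List ℕ) : Prop := l.Perm (idPerm n)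

/-- `l` is a two-stack sortable permutation (of `{1, …, len l}`). -/
def Is2SS (l : List ℕ) : Prop := IsPermOf l.length l ∧ S (S l) = idPerm l.length

/-- `σ^{+k}`: add `k` to every entry. -/
def shift (k : ℕ) (l : List ℕ) : List ℕ := l.map (· + k)

/-- `σ^{+(k1,m,k2)}`: add `k1` to every entry strictly smaller than `m`, `k2` to the others. -/
def shift3 (k1 m k2 : ℕ) (l : List ℕ) : List ℕ :=
  l.map (fun a => if a < m then a + k1 else a + k2)

/-- Standardization `P(A)`: the permutation of `{1,…,len A}` in the same relative order. -/
def stand (l : List ℕ) : List ℕ := l.map (fun a => (l.filter (fun b => b ≤ a)).length)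

/-- Avoidance of the pattern 231: no positions `i < j < k` with `l(k) < l(i) < l(j)`. -/
def Avoids231 (l : List ℕ) : Prop :=
  ¬ ∃ i j k, i < j ∧ j < k ∧ k < l.length ∧
      l.getD k 0 < l.getD i 0 ∧ l.getD i 0 < l.getD j 0

/-- The list of values of the left-to-right maxima of `l`, in order. -/
def lrMaxima (l : List ℕ) : List ℕ :=
  ((List.range l.length).filter
    (fun i => (l.take i).all (fun b => b < l.getD i 0))).map (fun i => l.getD i 0)

/-- `lmax`: the number of left-to-right maxima. -/
def lmax (l : List ℕ) : ℕ :=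
  (List.range l.length).countP (fun i => (l.take i).all (fun b => b < l.getD i 0))

/-- `rmax`: the number of right-to-left maxima. -/
def rmax (l : List ℕ) : ℕ :=
  (List.range l.length).countP (fun i => (l.drop (i+1)).all (fun b => b < l.getD i 0))

/-- `asc`: the number of ascents. -/
def asc (l : List ℕ) : ℕ :=
  (List.range (l.length - 1)).countP (fun i => l.getD i 0 < l.getD (i+1) 0)

/-- `des`: the number of descents. -/
def des (l : List ℕ) : ℕ :=
  (List.range (l.length - 1)).countP (fun i => l.getD (i+1) 0 < l.getD i 0)

/-- `slmax(π)`: the number of left-to-right maxima of `S(π)`. -/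
def slmax (l : List ℕ) : ℕ := lmax (S l)

/-- `sldes(π)`: the number of entries `a` that precede `a - 1` in `S(π)`. -/
def sldes (l : List ℕ) : ℕ :=
  (List.range (S l).length).countP
    (fun i => ((S l).drop (i+1)).any (fun b => b + 1 = (S l).getD i 0))

/-- The construction `C1(π1, π2) = π1 · (k+ℓ+1) · π2^{+k}`. -/
def C1 (p1 p2 : List ℕ) : List ℕ :=
  p1 ++ (p1.length + p2.length + 1) :: shift p1.length p2

/-- The `i`-th left-to-right maximum `a_i` of `S(π2)` (1-indexed). -/
def lrm (p2 : List ℕ) (i : ℕ) : ℕ := (lrMaxima (S p2)).getD (i - 1) 0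

/-- The construction `C2(π1, π2, i) = π1^{+(0,k,a_i)} · (k+ℓ+1) · π2^{+(k-1,a_i+1,k)}`. -/
def C2 (p1 p2 : List ℕ) (i : ℕ) : List ℕ :=
  shift3 0 p1.length (lrm p2 i) p1 ++
    (p1.length + p2.length + 1) :: shift3 (p1.length - 1) (lrm p2 i + 1) p1.length p2

/-- The decomposition `D(π) = (P(π_ℓ), P(π_r))`, where `π = π_ℓ · (n) · π_r`
with `n` the largest entry of `π`. -/
def D (l : List ℕ) : List ℕ × List ℕ :=
  match l with
  | [] => ([], [])
  | x :: t =>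
    let m := t.foldr max x
    (stand ((x :: t).takeWhile (· ≠ m)), stand (((x :: t).dropWhile (· ≠ m)).tail))

open scoped List

theorem le_foldr_max {α : Type} [LinearOrder α] (x : α) (l : List α) :
    ∀ a ∈ x :: l, a ≤ l.foldr max x := by
  induction l generalizing x with
  | nil => simp
  | cons b t ih =>
    intro a ha
    have h : (b :: t).foldr max x = max b (t.foldr max x) := rfl
    rw [h]
    rcases List.mem_cons.mp ha with rfl | ha
    · exact le_trans (ih a a (by simp)) (le_max_right _ _)
    · rcases List.mem_cons.mp ha with rfl | ha
      · exact le_max_left _ _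
      · exact le_trans (ih x a (List.mem_cons.mpr (Or.inr ha))) (le_max_right _ _)

theorem S_cons (x : ℕ) (l : List ℕ) :
    S (x :: l) = S ((x :: l).takeWhile (· ≠ l.foldr max x)) ++
      S (((x :: l).dropWhile (· ≠ l.foldr max x)).tail) ++ [l.foldr max x] := by
  rw [S]

theorem takeWhile_middle' {α : Type} (p : α → Bool) {m : α} {A B : List α}
    (hA : ∀ a ∈ A, p a = true) (hm : p m = false) :
    (A ++ m :: B).takeWhile p = A := by
  induction A with
  | nil => simp [List.takeWhile, hm]
  | cons a t ih =>
    simp only [List.cons_append, List.takeWhile_cons, hA a (by simp)]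
    simp [ih (fun b hb => hA b (by simp [hb]))]

theorem dropWhile_middle' {α : Type} (p : α → Bool) {m : α} {A B : List α}
    (hA : ∀ a ∈ A, p a = true) (hm : p m = false) :
    (A ++ m :: B).dropWhile p = m :: B := by
  induction A with
  | nil => simp [List.dropWhile, hm]
  | cons a t ih =>
    simp only [List.cons_append, List.dropWhile_cons, hA a (by simp)]
    exact ih (fun b hb => hA b (by simp [hb]))

theorem takeWhile_middle {m : ℕ} {A B : List ℕ} (hA : ∀ a ∈ A, a ≠ m) :
    (A ++ m :: B).takeWhile (· ≠ m) = A :=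
  takeWhile_middle' _ (fun a ha => by simp [hA a ha]) (by simp)

theorem dropWhile_middle {m : ℕ} {A B : List ℕ} (hA : ∀ a ∈ A, a ≠ m) :
    (A ++ m :: B).dropWhile (· ≠ m) = m :: B :=
  dropWhile_middle' _ (fun a ha => by simp [hA a ha]) (by simp)

theorem S_eq (A B : List ℕ) (m : ℕ) (hA : ∀ a ∈ A, a ≠ m)
    (hmax : ∀ a ∈ A ++ m :: B, a ≤ m) :
    S (A ++ m :: B) = S A ++ S B ++ [m] := by
  obtain ⟨x, t, hxt⟩ : ∃ x t, A ++ m :: B = x :: t := by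
    cases A with
    | nil => exact ⟨m, B, rfl⟩
    | cons a A' => exact ⟨a, A' ++ m :: B, rfl⟩
  have hfold : t.foldr max x = m := by
    have h1 : t.foldr max x ∈ A ++ m :: B := by rw [hxt]; exact foldr_max_mem x t
    have h2 : ∀ a ∈ A ++ m :: B, a ≤ t.foldr max x := by rw [hxt]; exact le_foldr_max x t
    exact le_antisymm (hmax _ h1) (h2 m (by simp))
  rw [hxt, S_cons, ← hxt, hfold, takeWhile_middle hA, dropWhile_middle hA, List.tail_cons]

theorem S_nil : S ([] : List ℕ) = [] := by rw [S]

theorem decomp_take {m : ℕ} {l : List ℕ} (hmem : m ∈ l) :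
    l = l.takeWhile (· ≠ m) ++ m :: (l.dropWhile (· ≠ m)).tail ∧
      ∀ a ∈ l.takeWhile (· ≠ m), a ≠ m := by
  have hd : l.dropWhile (· ≠ m) ≠ [] := by
    intro hnil
    have := List.dropWhile_eq_nil_iff.mp hnil m hmem
    simp at this
  have h1 : (l.dropWhile (· ≠ m)).head hd = m := by
    have h2 := List.head_dropWhile_not (fun a => decide (a ≠ m)) (l := l) (w := hd)
    simpa using h2
  have h3 : l.dropWhile (· ≠ m) = m :: (l.dropWhile (· ≠ m)).tail := by
    conv_lhs => rw [← List.cons_head_tail hd]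
    rw [h1]
  constructor
  · conv_lhs => rw [← List.takeWhile_append_dropWhile (p := fun a => decide (a ≠ m)) (l := l)]
    exact congrArg _ h3
  · intro a ha
    have := List.mem_takeWhile_imp ha
    simpa using this

theorem exists_decomp {l : List ℕ} (hl : l ≠ []) :
    ∃ A m B, l = A ++ m :: B ∧ (∀ a ∈ A, a ≠ m) ∧ (∀ a ∈ l, a ≤ m) := by
  obtain ⟨x, t, rfl⟩ := List.exists_cons_of_ne_nil hl
  obtain ⟨h1, h2⟩ := decomp_take (foldr_max_mem x t)
  exact ⟨_, _, _, h1, h2, le_foldr_max x t⟩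

theorem S_perm_aux : ∀ (n : ℕ) (l : List ℕ), l.length ≤ n → (S l).Perm l := by
  intro n
  induction n with
  | zero =>
    intro l hl
    have : l = [] := List.eq_nil_of_length_eq_zero (Nat.le_zero.mp hl)
    subst this; rw [S_nil]
  | succ n ih =>
    intro l hl
    rcases eq_or_ne l [] with rfl | hne
    · rw [S_nil]
    · obtain ⟨A, m, B, rfl, hA, hmax⟩ := exists_decomp hne
      rw [S_eq A B m hA hmax]
      have hlen : A.length + B.length + 1 ≤ n + 1 := by
        simp only [List.length_append, List.length_cons] at hl; omega
      have pA := ih A (by omega)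
      have pB := ih B (by omega)
      refine List.Perm.trans ((pA.append pB).append (List.Perm.refl [m])) ?_
      rw [List.append_assoc]
      exact List.Perm.append_left A (List.perm_append_singleton m B)

theorem S_perm (l : List ℕ) : (S l).Perm l := S_perm_aux l.length l le_rfl

/-- A 231 pattern, as a sublist. -/
def Pat (l : List ℕ) : Prop := ∃ a b c, c < a ∧ a < b ∧ [a, b, c] <+ l

theorem Pat.sublist {l₁ l₂ : List ℕ} (h : l₁ <+ l₂) : Pat l₁ → Pat l₂ :=
  fun ⟨a, b, c, h1, h2, h3⟩ => ⟨a, b, c, h1, h2, h3.trans h⟩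

theorem sorted_append' {l₁ l₂ : List ℕ} :
    (l₁ ++ l₂).Pairwise (· < ·) ↔
      l₁.Pairwise (· < ·) ∧ l₂.Pairwise (· < ·) ∧ ∀ a ∈ l₁, ∀ b ∈ l₂, a < b :=
  List.pairwise_append

theorem sorted_S_aux :
    ∀ (n : ℕ) (l : List ℕ), l.length ≤ n → l.Nodup → ¬ Pat l → (S l).Pairwise (· < ·) := by
  intro n
  induction n with
  | zero =>
    intro l hl _ _
    have : l = [] := List.eq_nil_of_length_eq_zero (Nat.le_zero.mp hl)
    subst this; rw [S_nil]; exact List.Pairwise.nil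
  | succ n ih =>
    intro l hl hnd hnp
    rcases eq_or_ne l [] with rfl | hne
    · rw [S_nil]; exact List.Pairwise.nil
    obtain ⟨A, m, B, rfl, hA, hmax⟩ := exists_decomp hne
    rw [S_eq A B m hA hmax]
    have hlen : A.length + B.length + 1 ≤ n + 1 := by
      simp only [List.length_append, List.length_cons] at hl; omega
    have hsubA : A <+ A ++ m :: B := List.sublist_append_left _ _
    have hsubB : B <+ A ++ m :: B :=
      (List.sublist_cons_self m B).trans (List.sublist_append_right A _)
    obtain ⟨ndA, ndmB, hdisj⟩ := List.nodup_append.mp hnd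
    have hmB : m ∉ B := (List.nodup_cons.mp ndmB).1
    have ndB : B.Nodup := (List.nodup_cons.mp ndmB).2
    have sA := ih A (by omega) ndA (fun hp => hnp (hp.sublist hsubA))
    have sB := ih B (by omega) ndB (fun hp => hnp (hp.sublist hsubB))
    have hcross : ∀ x ∈ A, ∀ y ∈ B, x < y := by
      intro x hx y hy
      rcases Nat.lt_or_ge x y with h | h
      · exact h
      · exfalso
        have hne' : y ≠ x := by
          intro he
          exact hdisj x hx x (List.mem_cons_of_mem m (he ▸ hy)) rfl
        have hyx : y < x := lt_of_le_of_ne h hne'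
        have hxm : x < m :=
          lt_of_le_of_ne (hmax x (List.mem_append.mpr (Or.inl hx))) (hA x hx)
        apply hnp
        refine ⟨x, m, y, hyx, hxm, ?_⟩
        have h1 : [x] <+ A := List.singleton_sublist.mpr hx
        have h2 : [y] <+ B := List.singleton_sublist.mpr hy
        have := List.Sublist.append h1 (List.Sublist.cons₂ m h2)
        simpa using this
    rw [List.append_assoc, sorted_append']
    refine ⟨sA, ?_, ?_⟩
    · rw [sorted_append']
      refine ⟨sB, List.pairwise_singleton _ m, ?_⟩
      intro y hy z hz
      simp only [List.mem_singleton] at hz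
      subst hz
      have hyB : y ∈ B := (S_perm B).subset hy
      refine lt_of_le_of_ne (hmax y (List.mem_append.mpr (Or.inr (by simp [hyB])))) ?_
      intro he; exact hmB (he ▸ hyB)
    · intro x hx y hy
      have hxA : x ∈ A := (S_perm A).subset hx
      rcases List.mem_append.mp hy with hy | hy
      · exact hcross x hxA y ((S_perm B).subset hy)
      · simp only [List.mem_singleton] at hy
        subst hy
        exact lt_of_le_of_ne (hmax x (List.mem_append.mpr (Or.inl hxA))) (hA x hxA)

theorem not_pat_aux :
    ∀ (n : ℕ) (l : List ℕ), l.length ≤ n → (S l).Pairwise (· < ·) → ¬ Pat l := by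
  intro n
  induction n with
  | zero =>
    intro l hl _ hp
    have hl0 : l = [] := List.eq_nil_of_length_eq_zero (Nat.le_zero.mp hl)
    subst hl0
    obtain ⟨a, b, c, _, _, hsub⟩ := hp
    simpa using hsub.length_le
  | succ n ih =>
    intro l hl hs hp
    rcases eq_or_ne l [] with rfl | hne
    · obtain ⟨a, b, c, _, _, hsub⟩ := hp
      simpa using hsub.length_le
    obtain ⟨A, m, B, rfl, hA, hmax⟩ := exists_decomp hne
    have hlen : A.length + B.length + 1 ≤ n + 1 := by
      simp only [List.length_append, List.length_cons] at hl; omega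
    rw [S_eq A B m hA hmax, List.append_assoc, sorted_append'] at hs
    obtain ⟨sA, hs2, hcrossA⟩ := hs
    rw [sorted_append'] at hs2
    obtain ⟨sB, _, _⟩ := hs2
    obtain ⟨a, b, c, hca, hab, hsub⟩ := hp
    have hbm : b ≤ m := hmax b (hsub.subset (by simp))
    have ham : a ≤ m := hmax a (hsub.subset (by simp))
    have key : a ∈ A → c ∈ B → False := by
      intro haA hcB
      have := hcrossA a ((S_perm A).mem_iff.mpr haA)
        c (List.mem_append.mpr (Or.inl ((S_perm B).mem_iff.mpr hcB)))
      omega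
    obtain ⟨u, v, huv, hu, hv⟩ := List.sublist_append_iff.mp hsub
    rcases u with _ | ⟨u1, (_ | ⟨u2, (_ | ⟨u3, u4⟩)⟩)⟩
    · -- u = []
      rw [List.nil_append] at huv
      subst huv
      cases hv with
      | cons _ h => exact ih B (by omega) sB ⟨a, b, c, hca, hab, h⟩
      | cons_cons _ h => omega
    · -- u = [u1]
      simp only [List.cons_append, List.nil_append] at huv
      injection huv with h1 h2
      subst h1
      subst h2
      have haA : a ∈ A := hu.subset (by simp)
      cases hv with
      | cons _ h => exact key haA (h.subset (by simp))
      | cons_cons _ h => exact key haA (h.subset (by simp))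
    · -- u = [u1, u2]
      simp only [List.cons_append, List.nil_append] at huv
      injection huv with h1 h2
      injection h2 with h2 h3
      subst h1
      subst h2
      subst h3
      have haA : a ∈ A := hu.subset (by simp)
      cases hv with
      | cons _ h => exact key haA (h.subset (by simp))
      | cons_cons _ h => omega
    · -- u = u1 :: u2 :: u3 :: u4
      simp only [List.cons_append] at huv
      injection huv with h1 h2
      injection h2 with h2 h3
      injection h3 with h3 h4
      subst h1
      subst h2
      subst h3
      have h5 : u4 = [] := by
        cases u4 with
        | nil => rfl
        | cons w ws => simp at h4
      subst h5
      exact ih A (by omega) sA ⟨a, b, c, hca, hab, by simpa using hu⟩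

theorem S_map_aux :
    ∀ (n : ℕ) (l : List ℕ) (f : ℕ → ℕ), l.length ≤ n →
      (∀ a ∈ l, ∀ b ∈ l, a ≤ b ↔ f a ≤ f b) → S (l.map f) = (S l).map f := by
  intro n
  induction n with
  | zero =>
    intro l f hl _
    have : l = [] := List.eq_nil_of_length_eq_zero (Nat.le_zero.mp hl)
    subst this; simp [S_nil]
  | succ n ih =>
    intro l f hl hf
    rcases eq_or_ne l [] with rfl | hne
    · simp [S_nil]
    obtain ⟨A, m, B, rfl, hA, hmax⟩ := exists_decomp hne
    have hlen : A.length + B.length + 1 ≤ n + 1 := by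
      simp only [List.length_append, List.length_cons] at hl; omega
    have hmemm : m ∈ A ++ m :: B := by simp
    have hmemA : ∀ a ∈ A, a ∈ A ++ m :: B := fun a ha => List.mem_append.mpr (Or.inl ha)
    have hmemB : ∀ a ∈ B, a ∈ A ++ m :: B := fun a ha => by simp [ha]
    have hfA : ∀ x ∈ A.map f, x ≠ f m := by
      intro x hx
      obtain ⟨a, ha, rfl⟩ := List.mem_map.mp hx
      intro he
      have h1 : a ≤ m := (hf a (hmemA a ha) m hmemm).mpr (le_of_eq he)
      have h2 : m ≤ a := (hf m hmemm a (hmemA a ha)).mpr (le_of_eq he.symm)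
      exact hA a ha (le_antisymm h1 h2)
    have hfmax : ∀ x ∈ A.map f ++ f m :: B.map f, x ≤ f m := by
      intro x hx
      have hx' : x ∈ (A ++ m :: B).map f := by
        rw [List.map_append, List.map_cons]; exact hx
      obtain ⟨a, ha, rfl⟩ := List.mem_map.mp hx'
      exact (hf a ha m hmemm).mp (hmax a ha)
    have e1 : (A ++ m :: B).map f = A.map f ++ f m :: B.map f := by
      rw [List.map_append, List.map_cons]
    rw [e1, S_eq _ _ _ hfA hfmax, S_eq A B m hA hmax,
      ih A f (by omega) (fun a ha b hb => hf a (hmemA a ha) b (hmemA b hb)),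
      ih B f (by omega) (fun a ha b hb => hf a (hmemB a ha) b (hmemB b hb))]
    simp [List.map_append]

/-- The counting function defining standardization. -/
def fcnt (l : List ℕ) (a : ℕ) : ℕ := (l.filter (fun b => b ≤ a)).length

theorem stand_eq (l : List ℕ) : stand l = l.map (fcnt l) := rfl

theorem fcnt_mono (l : List ℕ) {a b : ℕ} (hab : a ≤ b) : fcnt l a ≤ fcnt l b := by
  unfold fcnt
  rw [← List.countP_eq_length_filter, ← List.countP_eq_length_filter]
  exact List.countP_mono_left (fun x _ hx => by simp at hx ⊢; omega)

theorem fcnt_strict (l : List ℕ) {a b : ℕ} (hb : b ∈ l) (hab : a < b) :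
    fcnt l a < fcnt l b := by
  have hperm : l.Perm (b :: l.erase b) := List.perm_cons_erase hb
  unfold fcnt
  rw [← List.countP_eq_length_filter, ← List.countP_eq_length_filter,
    hperm.countP_eq, hperm.countP_eq, List.countP_cons, List.countP_cons]
  have h1 : (decide (b ≤ a) : Bool) = false := by simp; omega
  have h2 : (decide (b ≤ b) : Bool) = true := by simp
  rw [h1, h2, if_neg (by simp), if_pos rfl]
  have := List.countP_mono_left (l := l.erase b)
    (p := fun x => decide (x ≤ a)) (q := fun x => decide (x ≤ b))
    (fun x _ hx => by simp at hx ⊢; omega)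
  omega

theorem fcnt_iff {l : List ℕ} : ∀ a ∈ l, ∀ b ∈ l, a ≤ b ↔ fcnt l a ≤ fcnt l b := by
  intro a ha b hb
  constructor
  · exact fun h => fcnt_mono l h
  · intro h
    by_contra hab
    have := fcnt_strict l ha (Nat.not_le.mp hab)
    omega

theorem one_le_fcnt {l : List ℕ} {a : ℕ} (ha : a ∈ l) : 1 ≤ fcnt l a := by
  have : a ∈ l.filter (fun b => b ≤ a) := List.mem_filter.mpr ⟨ha, by simp⟩
  have := List.length_pos_iff.mpr (List.ne_nil_of_mem this)
  unfold fcnt; omega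

theorem fcnt_le_length (l : List ℕ) (a : ℕ) : fcnt l a ≤ l.length :=
  List.length_filter_le _ _

theorem length_idPerm (n : ℕ) : (idPerm n).length = n := by
  simp [idPerm]

theorem stand_perm_idPerm {l : List ℕ} (hl : l.Nodup) :
    (stand l).Perm (idPerm l.length) := by
  have hlen : (stand l).length = l.length := by rw [stand_eq, List.length_map]
  have hnd : (stand l).Nodup := by
    rw [stand_eq]
    refine List.Nodup.map_on ?_ hl
    intro a ha b hb he
    have h1 := (fcnt_iff a ha b hb).mpr (le_of_eq he)
    have h2 := (fcnt_iff b hb a ha).mpr (le_of_eq he.symm)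
    omega
  have hsub : stand l ⊆ idPerm l.length := by
    intro x hx
    rw [stand_eq] at hx
    obtain ⟨a, ha, rfl⟩ := List.mem_map.mp hx
    have h1 := one_le_fcnt ha
    have h2 := fcnt_le_length l a
    simp only [idPerm, List.mem_range'_1]
    omega
  have hsp := List.subperm_of_subset hnd hsub
  exact hsp.perm_of_length_le (by rw [length_idPerm, hlen])

theorem fcnt_congr {l l' : List ℕ} (h : l.Perm l') : fcnt l = fcnt l' := by
  funext a
  unfold fcnt
  rw [← List.countP_eq_length_filter, ← List.countP_eq_length_filter, h.countP_eq]

theorem stand_S (l : List ℕ) : stand (S l) = S (stand l) := by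
  rw [stand_eq, stand_eq, fcnt_congr (S_perm l)]
  exact (S_map_aux l.length l (fcnt l) le_rfl fcnt_iff).symm

theorem pat_map {l : List ℕ} {f : ℕ → ℕ}
    (hf : ∀ a ∈ l, ∀ b ∈ l, a ≤ b ↔ f a ≤ f b) : Pat (l.map f) → Pat l := by
  rintro ⟨x, y, z, hzx, hxy, hsub⟩
  obtain ⟨l', hl', he⟩ := List.sublist_map_iff.mp hsub
  rcases l' with _ | ⟨a, (_ | ⟨b, (_ | ⟨c, (_ | ⟨d, l''⟩)⟩)⟩)⟩ <;> simp at he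
  obtain ⟨rfl, rfl, rfl⟩ := he
  have haL : a ∈ l := hl'.subset (by simp)
  have hbL : b ∈ l := hl'.subset (by simp)
  have hcL : c ∈ l := hl'.subset (by simp)
  refine ⟨a, b, c, ?_, ?_, hl'⟩
  · by_contra hca
    have := (hf a haL c hcL).mp (by omega)
    omega
  · by_contra hab
    have := (hf b hbL a haL).mp (by omega)
    omega

theorem idPerm_sorted (n : ℕ) : (idPerm n).Pairwise (· < ·) :=
  List.pairwise_lt_range'

theorem key_lemma {A : List ℕ} (hnd : A.Nodup) (hnp : ¬ Pat (S A)) :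
    Is2SS (stand A) := by
  have hlenA : (stand A).length = A.length := by rw [stand_eq, List.length_map]
  have hndSA : (S A).Nodup := (S_perm A).nodup_iff.mpr hnd
  constructor
  · show (stand A).Perm (idPerm (stand A).length)
    rw [hlenA]
    exact stand_perm_idPerm hnd
  · have h1 : S (stand A) = stand (S A) := (stand_S A).symm
    have hnp2 : ¬ Pat (stand (S A)) := by
      rw [stand_eq]
      exact fun hp => hnp (pat_map fcnt_iff hp)
    have hnd2 : (stand (S A)).Nodup :=
      (stand_perm_idPerm hndSA).nodup_iff.mpr List.nodup_range'
    have hsorted : (S (stand (S A))).Pairwise (· < ·) :=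
      sorted_S_aux (stand (S A)).length _ le_rfl hnd2 hnp2
    have hperm2 : (S (stand (S A))).Perm (idPerm (S A).length) :=
      (S_perm _).trans (stand_perm_idPerm hndSA)
    have heq : S (stand (S A)) = idPerm (S A).length :=
      List.Perm.eq_of_pairwise (fun _ _ _ _ h1 h2 => absurd (h1.trans h2) (lt_irrefl _)) hsorted (idPerm_sorted _) hperm2
    rw [h1, heq, hlenA, (S_perm A).length_eq]

/-- If `π` is a two-stack sortable permutation of length `n ≥ 1` and
`D(π) = (π1, π2)`, then each of `π1`, `π2` is either empty or two-stack sortable. -/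
theorem D_valid (n : ℕ) (hn : 1 ≤ n) (π : List ℕ) (hlen : π.length = n)
    (h : Is2SS π) :
    ((D π).1 = [] ∨ Is2SS (D π).1) ∧ ((D π).2 = [] ∨ Is2SS (D π).2) := by
  obtain ⟨hperm0, hSS0⟩ := h
  cases π with
  | nil => simp at hlen; omega
  | cons x t =>
    rw [hlen] at hSS0
    have hperm : (x :: t).Perm (idPerm n) := by
      have h' : (x :: t).Perm (idPerm (x :: t).length) := hperm0
      rwa [hlen] at h'
    have hSS : S (S (x :: t)) = idPerm n := hSS0
    obtain ⟨A, m, B, hD, hdec, hA, hmax⟩ : ∃ A m B,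
        D (x :: t) = (stand A, stand B) ∧ x :: t = A ++ m :: B ∧
          (∀ a ∈ A, a ≠ m) ∧ ∀ a ∈ x :: t, a ≤ m := by
      obtain ⟨h1, h2⟩ := decomp_take (foldr_max_mem x t)
      exact ⟨_, _, _, by simp [D], h1, h2, le_foldr_max x t⟩
    have hndπ : (x :: t).Nodup := by
      refine hperm.nodup_iff.mpr ?_
      unfold idPerm
      exact List.nodup_range'
    have hmn : m = n := by
      have h1 : m ∈ x :: t := by rw [hdec]; simp
      have h2 : m ∈ idPerm n := hperm.subset h1
      have h3 : m ≤ n := by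
        unfold idPerm at h2; rw [List.mem_range'_1] at h2; omega
      have h4 : n ∈ x :: t := by
        refine hperm.symm.subset ?_
        unfold idPerm; rw [List.mem_range'_1]; omega
      have h5 := hmax n h4
      omega
    subst hmn
    have hmaxd : ∀ a ∈ A ++ m :: B, a ≤ m := by rw [← hdec]; exact hmax
    have hnd : (A ++ m :: B).Nodup := by rw [← hdec]; exact hndπ
    obtain ⟨ndA, ndmB, hdisj⟩ := List.nodup_append.mp hnd
    have hmB : m ∉ B := (List.nodup_cons.mp ndmB).1
    have ndB : B.Nodup := (List.nodup_cons.mp ndmB).2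
    have hSπ : S (x :: t) = S A ++ S B ++ [m] := by
      rw [hdec]; exact S_eq A B m hA hmaxd
    have hA' : ∀ a ∈ S A ++ S B, a ≠ m := by
      intro a ha
      rcases List.mem_append.mp ha with ha | ha
      · exact hA a ((S_perm A).subset ha)
      · intro he; exact hmB (he ▸ (S_perm B).subset ha)
    have hmax' : ∀ a ∈ (S A ++ S B) ++ m :: ([] : List ℕ), a ≤ m := by
      intro a ha
      rcases List.mem_append.mp ha with ha | ha
      · rcases List.mem_append.mp ha with ha | ha
        · exact hmaxd a (List.mem_append.mpr (Or.inl ((S_perm A).subset ha)))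
        · exact hmaxd a (by simp [(S_perm B).subset ha])
      · simp at ha; omega
    have hkey : S (S A ++ S B) ++ [m] = idPerm m := by
      have h6 := S_eq (S A ++ S B) [] m hA' hmax'
      rw [S_nil, List.append_nil] at h6
      have h7 : (S A ++ S B) ++ m :: ([] : List ℕ) = S (x :: t) := by rw [hSπ]
      rw [h7, hSS] at h6
      exact h6.symm
    have hidn : idPerm m = idPerm (m - 1) ++ [m] := by
      obtain ⟨k, rfl⟩ : ∃ k, m = k + 1 := ⟨m - 1, by omega⟩
      unfold idPerm
      rw [List.range'_concat]
      simp [Nat.add_comm]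
    have hST : S (S A ++ S B) = idPerm (m - 1) := by
      refine List.append_cancel_right (bs := [m]) ?_
      rw [hkey, hidn]
    have hsortedT : (S (S A ++ S B)).Pairwise (· < ·) := by
      rw [hST]; exact idPerm_sorted _
    have hnpT := not_pat_aux (S A ++ S B).length _ le_rfl hsortedT
    have hnpA : ¬ Pat (S A) := fun hp => hnpT (hp.sublist (List.sublist_append_left _ _))
    have hnpB : ¬ Pat (S B) := fun hp => hnpT (hp.sublist (List.sublist_append_right _ _))
    rw [hD]
    exact ⟨Or.inr (key_lemma ndA hnpA), Or.inr (key_lemma ndB hnpB)⟩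

end TSP
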